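/- For a uniformly random bijection π of an n-set conditioned on π(u) = C and π(v) ∈ [A+1, B] (where u ≠ v, 1 ≤ C ≤ A < B ≤ n), the expected size of the influenced set S_v^π of the dynamic greedy MIS update between u and v is strictly less than n/(B−A). -/

import Mathlib

variable {V : Type*} [Fintype V] [DecidableEq V]

/-- The greedy MIS of `G` with respect to the order given by the rank function
`π : V → ℕ`: a vertex is selected iff no `π`-earlier neighbor is selected. -/
def greedyMIS (G : SimpleGraph V) (π : V → ℕ) : V → Prop :=
  fun v => ∀ w, G.Adj w v → π w < π v → ¬ greedyMIS G π w
termination_by v => π v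
decreasing_by assumption

/-- `I_w^π`: the set of neighbors of `w` in `G` preceding `w` in the order `π`. -/
def predSet (G : SimpleGraph V) (π : V → ℕ) (w : V) : Set V :=
  {x | G.Adj x w ∧ π x < π w}

/-- The iterative construction: `S₀ = {v}`,
`S_{i+1} = {w ∈ M : S_i ∩ I_w ≠ ∅} ∪ {w ∉ M : I_w ∩ M ⊆ ⋃_{j ≤ i} S_j}`. -/
def Sseq (M : Set V) (I : V → Set V) (v : V) : ℕ → Set V
  | 0 => {v}
  | (i + 1) =>
      {w | w ∈ M ∧ (Sseq M I v i ∩ I w).Nonempty} ∪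
        {w | w ∉ M ∧ I w ∩ M ⊆ ⋃ j ≤ i, Sseq M I v j}

/-- `v` violates its greedy-MIS constraint after the update from `G` to `G'`:
either `v` is in the (old) greedy MIS and has an earlier MIS neighbor in `G'`,
or `v` is not in the greedy MIS and has no earlier MIS neighbor in `G'`. -/
def violated (G G' : SimpleGraph V) (π : V → ℕ) (v : V) : Prop :=
  (greedyMIS G π v ∧ ∃ w ∈ predSet G' π v, greedyMIS G π w) ∨
    (¬ greedyMIS G π v ∧ ∀ w ∈ predSet G' π v, ¬ greedyMIS G π w)

/-- The influenced set `S_v^π` of the edge update from `G` to `G'`: empty if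
`v` does not violate its greedy constraint after the update, and otherwise the
union `⋃ i, S_i` of the iterative construction (with `M` the greedy MIS of the
old graph `G` and predecessor neighborhoods taken in the updated graph `G'`). -/
def influencedSet (G G' : SimpleGraph V) (π : V → ℕ) (v : V) : Set V :=
  {x | violated G G' π v ∧
    x ∈ ⋃ i, Sseq {y | greedyMIS G π y} (predSet G' π) v i}

open scoped Classical

------------------------------------------------------------------
-- Section B : basic lemmas
------------------------------------------------------------------

theorem greedyMIS_iff (G : SimpleGraph V) (π : V → ℕ) (y : V) :
    greedyMIS G π y ↔ ∀ w, G.Adj w y → π w < π y → ¬ greedyMIS G π w := by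
  rw [greedyMIS]

theorem not_greedyMIS_iff (G : SimpleGraph V) (π : V → ℕ) (y : V) :
    ¬ greedyMIS G π y ↔ ∃ w, G.Adj w y ∧ π w < π y ∧ greedyMIS G π w := by
  rw [greedyMIS_iff]; push_neg
  simp only [not_not]

theorem greedy_not_adj {G : SimpleGraph V} {π : V → ℕ} (hinj : Function.Injective π)
    {y z : V} (hy : greedyMIS G π y) (hz : greedyMIS G π z) (hadj : G.Adj y z) : False := by
  rcases lt_trichotomy (π y) (π z) with h | h | h
  · exact (greedyMIS_iff G π z).1 hz y hadj h hy
  · exact hadj.ne (hinj h)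
  · exact (greedyMIS_iff G π y).1 hy z hadj.symm h hz

/-- the union of the `Sseq` sets -/
def UU (G G' : SimpleGraph V) (π : V → ℕ) (v : V) : Set V :=
  ⋃ i, Sseq {y | greedyMIS G π y} (predSet G' π) v i


theorem mem_Sseq_zero {M : Set V} {I : V → Set V} {v w : V} :
    w ∈ Sseq M I v 0 ↔ w = v := by rw [Sseq]; exact Set.mem_singleton_iff

theorem mem_Sseq_succ {M : Set V} {I : V → Set V} {v w : V} {i : ℕ} :
    w ∈ Sseq M I v (i+1) ↔
      (w ∈ M ∧ (Sseq M I v i ∩ I w).Nonempty) ∨ (w ∉ M ∧ I w ∩ M ⊆ ⋃ j ≤ i, Sseq M I v j) := by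
  rw [Sseq]; exact Set.mem_union _ _ _

theorem v_mem_UU (G G' : SimpleGraph V) (π : V → ℕ) (v : V) : v ∈ UU G G' π v :=
  Set.mem_iUnion.2 ⟨0, mem_Sseq_zero.2 rfl⟩

theorem UU_closureM {G G' : SimpleGraph V} {π : V → ℕ} {v : V} {w y : V}
    (hw : greedyMIS G π w) (hy : y ∈ UU G G' π v) (hyI : y ∈ predSet G' π w) :
    w ∈ UU G G' π v := by
  obtain ⟨i, hi⟩ := Set.mem_iUnion.1 hy
  exact Set.mem_iUnion.2 ⟨i + 1, mem_Sseq_succ.2 (Or.inl ⟨hw, ⟨y, hi, hyI⟩⟩)⟩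

theorem Sseq_subset_mono {M : Set V} {I : V → Set V} {v : V} {i i' : ℕ} (h : i ≤ i') :
    (⋃ j ≤ i, Sseq M I v j) ⊆ ⋃ j ≤ i', Sseq M I v j := by
  intro x hx
  simp only [Set.mem_iUnion] at hx ⊢
  obtain ⟨j, hj, hx⟩ := hx
  exact ⟨j, hj.trans h, hx⟩

theorem UU_closureN {G G' : SimpleGraph V} {π : V → ℕ} {v : V} {w : V}
    (hw : ¬ greedyMIS G π w)
    (hsub : predSet G' π w ∩ {y | greedyMIS G π y} ⊆ UU G G' π v) :
    w ∈ UU G G' π v := by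
  -- find a single index i with the finite set inside ⋃ j ≤ i
  have key : ∀ (F : Finset V), (↑F : Set V) ⊆ UU G G' π v →
      ∃ i, (↑F : Set V) ⊆ ⋃ j ≤ i, Sseq {y | greedyMIS G π y} (predSet G' π) v j := by
    intro F
    induction F using Finset.induction_on with
    | empty => intro _; exact ⟨0, by simp⟩
    | insert a s hx ih =>
      intro hsub'
      obtain ⟨i₁, hi₁⟩ := ih (by
        intro x hx'; exact hsub' (by simp [hx']))
      have ha : a ∈ UU G G' π v := hsub' (by simp)
      obtain ⟨i₂, hi₂⟩ := Set.mem_iUnion.1 ha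
      refine ⟨max i₁ i₂, ?_⟩
      intro x hx'
      simp only [Finset.coe_insert, Set.mem_insert_iff] at hx'
      rcases hx' with rfl | hx'
      · exact Sseq_subset_mono (le_max_right _ _)
          (by simp only [Set.mem_iUnion]; exact ⟨i₂, le_refl _, hi₂⟩)
      · exact Sseq_subset_mono (le_max_left _ _) (hi₁ hx')
  set T : Set V := predSet G' π w ∩ {y | greedyMIS G π y} with hT
  have hTfin : T.Finite := Set.toFinite T
  obtain ⟨i, hi⟩ := key hTfin.toFinset (by rw [Set.Finite.coe_toFinset]; exact hsub)
  rw [Set.Finite.coe_toFinset] at hi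
  exact Set.mem_iUnion.2 ⟨i + 1, mem_Sseq_succ.2 (Or.inr ⟨hw, hi⟩)⟩

theorem UU_elim {G G' : SimpleGraph V} {π : V → ℕ} {v : V} {w : V}
    (hw : w ∈ UU G G' π v) :
    w = v ∨ (greedyMIS G π w ∧ ∃ y ∈ UU G G' π v, y ∈ predSet G' π w) ∨
      (¬ greedyMIS G π w ∧ predSet G' π w ∩ {y | greedyMIS G π y} ⊆ UU G G' π v) := by
  obtain ⟨i, hi⟩ := Set.mem_iUnion.1 hw
  match i, hi with
  | 0, hi => exact Or.inl (mem_Sseq_zero.1 hi)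
  | (i+1), hi =>
    rcases mem_Sseq_succ.1 hi with ⟨hM, y, hy, hyI⟩ | ⟨hM, hsub⟩
    · exact Or.inr (Or.inl ⟨hM, y, Set.mem_iUnion.2 ⟨i, hy⟩, hyI⟩)
    · refine Or.inr (Or.inr ⟨hM, hsub.trans ?_⟩)
      intro x hx
      simp only [Set.mem_iUnion] at hx
      obtain ⟨j, _, hx⟩ := hx
      exact Set.mem_iUnion.2 ⟨j, hx⟩

/-- which edge differs -/
theorem adj_diff {G G' : SimpleGraph V} {u v : V}
    (hupd : G' = G ⊔ SimpleGraph.fromEdgeSet {s(u, v)} ∨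
      G' = G \ SimpleGraph.fromEdgeSet {s(u, v)})
    {a b : V} (h1 : G.Adj a b) (h2 : ¬ G'.Adj a b) :
    (a = u ∧ b = v) ∨ (a = v ∧ b = u) := by
  rcases hupd with rfl | rfl
  · exact absurd ((SimpleGraph.sup_adj _ _ _ _).2 (Or.inl h1)) h2
  · have hmem : s(a, b) = s(u, v) := by
      by_contra hne
      exact h2 ⟨h1, by simp [SimpleGraph.fromEdgeSet_adj, hne]⟩
    rcases Sym2.eq_iff.1 hmem with ⟨rfl, rfl⟩ | ⟨rfl, rfl⟩
    · exact Or.inl ⟨rfl, rfl⟩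
    · exact Or.inr ⟨rfl, rfl⟩

theorem adj_diff' {G G' : SimpleGraph V} {u v : V}
    (hupd : G' = G ⊔ SimpleGraph.fromEdgeSet {s(u, v)} ∨
      G' = G \ SimpleGraph.fromEdgeSet {s(u, v)})
    {a b : V} (h1 : G'.Adj a b) (h2 : ¬ G.Adj a b) :
    (a = u ∧ b = v) ∨ (a = v ∧ b = u) := by
  rcases hupd with rfl | rfl
  · rcases (SimpleGraph.sup_adj _ _ _ _).1 h1 with h | h
    · exact absurd h h2
    · rw [SimpleGraph.fromEdgeSet_adj] at h
      rcases Sym2.eq_iff.1 h.1 with ⟨rfl, rfl⟩ | ⟨rfl, rfl⟩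
      · exact Or.inl ⟨rfl, rfl⟩
      · exact Or.inr ⟨rfl, rfl⟩
  · exact absurd h1.1 h2

/-- Lemma A : all influenced vertices are at or above v -/
theorem UU_rank_le {G G' : SimpleGraph V} {u v : V} {π : V → ℕ}
    (hupd : G' = G ⊔ SimpleGraph.fromEdgeSet {s(u, v)} ∨
      G' = G \ SimpleGraph.fromEdgeSet {s(u, v)}) :
    ∀ w ∈ UU G G' π v, π v ≤ π w := by
  have H : ∀ k (w : V), w ∈ UU G G' π v → π w = k → π v ≤ π w := by
    intro k
    induction k using Nat.strong_induction_on with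
    | _ k IH =>
      intro w hw hk
      rcases UU_elim hw with rfl | ⟨_, y, hy, hyI⟩ | ⟨hnM, hsub⟩
      · exact le_refl _
      · exact (IH (π y) (hk ▸ hyI.2) y hy rfl).trans hyI.2.le
      · by_cases hne : (predSet G' π w ∩ {y | greedyMIS G π y}).Nonempty
        · obtain ⟨z, hz⟩ := hne
          exact (IH (π z) (hk ▸ hz.1.2) z (hsub hz) rfl).trans hz.1.2.le
        · obtain ⟨z, hadj, hzlt, hzg⟩ := (not_greedyMIS_iff G π w).1 hnM
          have hz' : z ∉ predSet G' π w := by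
            intro hmem
            exact hne ⟨z, hmem, hzg⟩
          have hnadj : ¬ G'.Adj z w := fun hc => hz' ⟨hc, hzlt⟩
          rcases adj_diff hupd hadj hnadj with ⟨rfl, rfl⟩ | ⟨rfl, rfl⟩
          · exact le_refl _
          · exact hzlt.le
  intro w hw; exact H (π w) w hw rfl

------------------------------------------------------------------
-- Section C : the invariance lemma
------------------------------------------------------------------

section INV

variable {G G' : SimpleGraph V} {u v : V} {π π' : V → ℕ}

theorem u_not_mem_UU (hupd : G' = G ⊔ SimpleGraph.fromEdgeSet {s(u, v)} ∨
      G' = G \ SimpleGraph.fromEdgeSet {s(u, v)}) (H3 : π u < π v) :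
    u ∉ UU G G' π v := fun h => absurd (UU_rank_le hupd u h) (not_le.2 H3)

theorem greedy_eq
    (hupd : G' = G ⊔ SimpleGraph.fromEdgeSet {s(u, v)} ∨
      G' = G \ SimpleGraph.fromEdgeSet {s(u, v)})
    (hinj : Function.Injective π) (hinj' : Function.Injective π')
    (hviol : violated G G' π v)
    (H1 : ∀ y ∈ UU G G' π v, ∀ z ∈ UU G G' π v, (π y < π z ↔ π' y < π' z))
    (H2 : ∀ y ∉ UU G G' π v, ∀ z ∉ UU G G' π v, (π y < π z ↔ π' y < π' z))
    (H3 : π u < π v) (H3' : π' u < π' v) :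
    ∀ y, greedyMIS G π' y ↔ greedyMIS G π y := by
  set U := UU G G' π v with hU
  have main : ∀ k, ∀ y, π' y = k → (greedyMIS G π' y ↔ greedyMIS G π y) := by
    intro k
    induction k using Nat.strong_induction_on with
    | _ k IH =>
    intro y hky
    have IH' : ∀ z, π' z < π' y → (greedyMIS G π' z ↔ greedyMIS G π z) :=
      fun z hz => IH (π' z) (hky ▸ hz) z rfl
    by_cases hgy : greedyMIS G π y
    · -- y in M : show greedy under π'
      simp only [hgy, iff_true]
      rw [greedyMIS_iff]
      intro w hadj hlt' hg'w
      exact greedy_not_adj hinj ((IH' w hlt').1 hg'w) hgy hadj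
    · -- y not in M : find an earlier π'-witness
      simp only [hgy, iff_false]
      obtain ⟨z₀, hz₀adj, hz₀lt, hz₀g⟩ := (not_greedyMIS_iff G π y).1 hgy
      rw [not_greedyMIS_iff]
      by_cases hyU : y ∈ U
      · by_cases hEU : ∃ z, (G.Adj z y ∧ π z < π y ∧ greedyMIS G π z) ∧ z ∈ U
        · obtain ⟨z, ⟨hadj, hlt, hg⟩, hzU⟩ := hEU
          have hlt' : π' z < π' y := (H1 z hzU y hyU).1 hlt
          exact ⟨z, hadj, hlt', (IH' z hlt').2 hg⟩
        · push_neg at hEU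
          -- every eliminator is outside U
          by_cases hyv : y = v
          · subst hyv
            -- use violatedness : the only eliminator can be u
            have hall : ∀ w ∈ predSet G' π y, ¬ greedyMIS G π w := by
              rcases hviol with ⟨hgv, _⟩ | ⟨_, hall⟩
              · exact absurd hgv hgy
              · exact hall
            have hzu : z₀ = u := by
              have hnadj : ¬ G'.Adj z₀ y := fun hc => hall z₀ ⟨hc, hz₀lt⟩ hz₀g
              rcases adj_diff hupd hz₀adj hnadj with ⟨h, _⟩ | ⟨h, _⟩
              · exact h
              · rw [h] at hz₀adj; exact absurd hz₀adj (G.irrefl)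
            rw [hzu] at hz₀adj hz₀g
            exact ⟨u, hz₀adj, H3', (IH' u H3').2 hz₀g⟩
          · -- y ∈ U, y ≠ v, not greedy : the N-case of UU_elim
            rcases UU_elim hyU with hyv' | ⟨hgy', _⟩ | ⟨_, hsub⟩
            · exact absurd hyv' hyv
            · exact absurd hgy' hgy
            · exfalso
              have hnadj : ¬ G'.Adj z₀ y := by
                intro hc
                exact hEU z₀ ⟨hz₀adj, hz₀lt, hz₀g⟩ (hsub ⟨⟨hc, hz₀lt⟩, hz₀g⟩)
              rcases adj_diff hupd hz₀adj hnadj with ⟨_, hy⟩ | ⟨_, hy⟩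
              · exact hyv hy
              · rw [hy] at hyU; exact u_not_mem_UU hupd H3 hyU
      · by_cases hEU : ∃ z, (G.Adj z y ∧ π z < π y ∧ greedyMIS G π z) ∧ z ∉ U
        · obtain ⟨z, ⟨hadj, hlt, hg⟩, hzU⟩ := hEU
          have hlt' : π' z < π' y := (H2 z hzU y hyU).1 hlt
          exact ⟨z, hadj, hlt', (IH' z hlt').2 hg⟩
        · push_neg at hEU
          exfalso
          apply hyU
          apply UU_closureN hgy
          intro z ⟨⟨hadj', hlt'⟩, hg⟩
          by_cases hGadj : G.Adj z y
          · exact hEU z ⟨hGadj, hlt', hg⟩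
          · rcases adj_diff' hupd hadj' hGadj with ⟨hz, hy⟩ | ⟨hz, hy⟩
            · rw [hy] at hyU; exact absurd (v_mem_UU G G' π v) hyU
            · rw [hz, hy] at hlt'; exact absurd (hlt'.trans H3) (lt_irrefl _)
  exact fun y => main (π' y) y rfl

theorem violated'
    (hupd : G' = G ⊔ SimpleGraph.fromEdgeSet {s(u, v)} ∨
      G' = G \ SimpleGraph.fromEdgeSet {s(u, v)})
    (hinj : Function.Injective π) (hinj' : Function.Injective π')
    (hviol : violated G G' π v)
    (H1 : ∀ y ∈ UU G G' π v, ∀ z ∈ UU G G' π v, (π y < π z ↔ π' y < π' z))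
    (H2 : ∀ y ∉ UU G G' π v, ∀ z ∉ UU G G' π v, (π y < π z ↔ π' y < π' z))
    (H3 : π u < π v) (H3' : π' u < π' v) :
    violated G G' π' v := by
  have geq := greedy_eq hupd hinj hinj' hviol H1 H2 H3 H3'
  rcases hviol with ⟨hgv, w, ⟨hadj, hlt⟩, hgw⟩ | ⟨hngv, hall⟩
  · left
    refine ⟨(geq v).2 hgv, ?_⟩
    have hwu : w = u := by
      by_cases hGadj : G.Adj w v
      · exact absurd hGadj (fun hc => greedy_not_adj hinj hgw hgv hc)
      · rcases adj_diff' hupd hadj hGadj with ⟨h, _⟩ | ⟨h, _⟩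
        · exact h
        · rw [h] at hadj; exact absurd hadj (G'.irrefl)
    rw [hwu] at hadj hgw
    exact ⟨u, ⟨hadj, H3'⟩, (geq u).2 hgw⟩
  · right
    refine ⟨fun hc => hngv ((geq v).1 hc), ?_⟩
    intro w ⟨hadj, hlt'⟩ hg'w
    have hgw : greedyMIS G π w := (geq w).1 hg'w
    by_cases hlt : π w < π v
    · exact hall w ⟨hadj, hlt⟩ hgw
    · have hne : w ≠ v := fun hc => (G'.irrefl (hc ▸ hadj))
      have hvw : π v < π w := lt_of_le_of_ne (not_lt.1 hlt) (fun hc => hne (hinj hc.symm))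
      have hwU : w ∈ UU G G' π v :=
        UU_closureM hgw (v_mem_UU G G' π v) ⟨hadj.symm, hvw⟩
      exact absurd ((H1 w hwU v (v_mem_UU G G' π v)).2 hlt') hlt

theorem UU_eq
    (hupd : G' = G ⊔ SimpleGraph.fromEdgeSet {s(u, v)} ∨
      G' = G \ SimpleGraph.fromEdgeSet {s(u, v)})
    (hinj : Function.Injective π) (hinj' : Function.Injective π')
    (hviol : violated G G' π v)
    (H1 : ∀ y ∈ UU G G' π v, ∀ z ∈ UU G G' π v, (π y < π z ↔ π' y < π' z))
    (H2 : ∀ y ∉ UU G G' π v, ∀ z ∉ UU G G' π v, (π y < π z ↔ π' y < π' z))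
    (H3 : π u < π v) (H3' : π' u < π' v) :
    UU G G' π' v = UU G G' π v := by
  have geq := greedy_eq hupd hinj hinj' hviol H1 H2 H3 H3'
  apply Set.Subset.antisymm
  · -- U' ⊆ U, strong induction on π' rank
    have main : ∀ k, ∀ w, w ∈ UU G G' π' v → π' w = k → w ∈ UU G G' π v := by
      intro k
      induction k using Nat.strong_induction_on with
      | _ k IH =>
      intro w hw' hkw
      have IH' : ∀ z, π' z < π' w → z ∈ UU G G' π' v → z ∈ UU G G' π v :=
        fun z hz hz' => IH (π' z) (hkw ▸ hz) z hz' rfl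
      rcases UU_elim hw' with hwv | ⟨hg'w, y, hyU', ⟨hadj, hlt'⟩⟩ | ⟨hng'w, hsub'⟩
      · rw [hwv]; exact v_mem_UU G G' π v
      · -- M-case
        have hgw : greedyMIS G π w := (geq w).1 hg'w
        have hyU : y ∈ UU G G' π v := IH' y hlt' hyU'
        by_cases hlt : π y < π w
        · exact UU_closureM hgw hyU ⟨hadj, hlt⟩
        · have hne : y ≠ w := fun hc => (G'.irrefl (hc ▸ hadj))
          have hwy : π w < π y := lt_of_le_of_ne (not_lt.1 hlt) (fun hc => hne (hinj hc).symm)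
          -- w is an earlier G'-neighbour of y ∈ U
          rcases UU_elim hyU with hyv | ⟨hgy, _⟩ | ⟨hngy, hsuby⟩
          · -- y = v
            rw [hyv] at hadj hwy hlt'
            rcases hviol with ⟨hgv, _⟩ | ⟨_, hall⟩
            · by_cases hGadj : G.Adj w v
              · exact absurd hGadj (fun hc => greedy_not_adj hinj hgw hgv hc)
              · rcases adj_diff' hupd (hadj.symm) hGadj with ⟨hwu, _⟩ | ⟨hwv, _⟩
                · rw [hwu] at hlt'
                  exact absurd (hlt'.trans H3') (lt_irrefl _)
                · rw [hwv]; exact v_mem_UU G G' π v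
            · exact absurd hgw (hall w ⟨hadj.symm, hwy⟩)
          · -- y greedy
            by_cases hGadj : G.Adj w y
            · exact absurd hGadj (fun hc => greedy_not_adj hinj hgw hgy hc)
            · rcases adj_diff' hupd (hadj.symm) hGadj with ⟨hwu, hyv⟩ | ⟨hwv, _⟩
              · rw [hwu] at hlt'; rw [hyv] at hlt'
                exact absurd (hlt'.trans H3') (lt_irrefl _)
              · rw [hwv]; exact v_mem_UU G G' π v
          · -- y in the N-case : its earlier MIS neighbours are all in U
            exact hsuby ⟨⟨hadj.symm, hwy⟩, hgw⟩
      · -- N-case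
        have hngw : ¬ greedyMIS G π w := fun hc => hng'w ((geq w).2 hc)
        by_cases hwU : w ∈ UU G G' π v
        · exact hwU
        · apply UU_closureN hngw
          intro z ⟨⟨hadj, hlt⟩, hgz⟩
          by_cases hlt' : π' z < π' w
          · exact IH' z hlt' (hsub' ⟨⟨hadj, hlt'⟩, (geq z).2 hgz⟩)
          · by_contra hzU
            exact hlt' ((H2 z hzU w hwU).1 hlt)
    exact fun w hw => main (π' w) w hw rfl
  · -- U ⊆ U', strong induction on π rank
    have main : ∀ k, ∀ w, w ∈ UU G G' π v → π w = k → w ∈ UU G G' π' v := by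
      intro k
      induction k using Nat.strong_induction_on with
      | _ k IH =>
      intro w hw hkw
      have IH' : ∀ z, π z < π w → z ∈ UU G G' π v → z ∈ UU G G' π' v :=
        fun z hz hz' => IH (π z) (hkw ▸ hz) z hz' rfl
      rcases UU_elim hw with hwv | ⟨hgw, y, hyU, ⟨hadj, hlt⟩⟩ | ⟨hngw, hsub⟩
      · rw [hwv]; exact v_mem_UU G G' π' v
      · have hyU' : y ∈ UU G G' π' v := IH' y hlt hyU
        exact UU_closureM ((geq w).2 hgw) hyU' ⟨hadj, (H1 y hyU w hw).1 hlt⟩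
      · apply UU_closureN (fun hc => hngw ((geq w).1 hc))
        intro z ⟨⟨hadj, hlt'⟩, hg'z⟩
        have hgz : greedyMIS G π z := (geq z).1 hg'z
        by_cases hlt : π z < π w
        · exact IH' z hlt (hsub ⟨⟨hadj, hlt⟩, hgz⟩)
        · have hne : z ≠ w := fun hc => (G'.irrefl (hc ▸ hadj))
          have hwz : π w < π z := lt_of_le_of_ne (not_lt.1 hlt) (fun hc => hne (hinj hc).symm)
          have hzU : z ∈ UU G G' π v := UU_closureM hgz hw ⟨hadj.symm, hwz⟩
          exact absurd ((H1 z hzU w hw).2 hlt') hlt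
    exact fun w hw => main (π w) w hw rfl

end INV

------------------------------------------------------------------
-- Section D : influencedSet lemmas, uniqueness, constructions
------------------------------------------------------------------

theorem influencedSet_eq_UU {G G' : SimpleGraph V} {π : V → ℕ} {v : V}
    (hviol : violated G G' π v) : influencedSet G G' π v = UU G G' π v := by
  ext y
  simp only [influencedSet, Set.mem_setOf_eq, hviol, true_and]
  rfl

theorem violated_of_mem {G G' : SimpleGraph V} {π : V → ℕ} {v x : V}
    (hx : x ∈ influencedSet G G' π v) : violated G G' π v := hx.1

theorem v_mem_influencedSet {G G' : SimpleGraph V} {π : V → ℕ} {v : V}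
    (hviol : violated G G' π v) : v ∈ influencedSet G G' π v := by
  rw [influencedSet_eq_UU hviol]; exact v_mem_UU G G' π v

/-- the full invariance lemma, packaged for `influencedSet` -/
theorem influencedSet_invariance {G G' : SimpleGraph V} {u v : V} {π π' : V → ℕ}
    (hupd : G' = G ⊔ SimpleGraph.fromEdgeSet {s(u, v)} ∨
      G' = G \ SimpleGraph.fromEdgeSet {s(u, v)})
    (hinj : Function.Injective π) (hinj' : Function.Injective π')
    (hviol : violated G G' π v)
    (H1 : ∀ y ∈ influencedSet G G' π v, ∀ z ∈ influencedSet G G' π v,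
      (π y < π z ↔ π' y < π' z))
    (H2 : ∀ y ∉ influencedSet G G' π v, ∀ z ∉ influencedSet G G' π v,
      (π y < π z ↔ π' y < π' z))
    (H3 : π u < π v) (H3' : π' u < π' v) :
    influencedSet G G' π' v = influencedSet G G' π v := by
  rw [influencedSet_eq_UU hviol] at H1 H2
  have hviol' : violated G G' π' v := violated' hupd hinj hinj' hviol H1 H2 H3 H3'
  rw [influencedSet_eq_UU hviol, influencedSet_eq_UU hviol']
  exact UU_eq hupd hinj hinj' hviol H1 H2 H3 H3'

/-- a finset of naturals : distinct elements have distinct lower-counts -/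
theorem filter_lt_card_inj {W : Finset ℕ} {x y : ℕ} (hx : x ∈ W) (hy : y ∈ W)
    (h : (W.filter (· < x)).card = (W.filter (· < y)).card) : x = y := by
  by_contra hne
  rcases lt_or_gt_of_ne hne with hlt | hlt
  · have : (W.filter (· < x)) ⊂ (W.filter (· < y)) := by
      constructor
      · intro a ha; simp only [Finset.mem_filter] at ha ⊢; exact ⟨ha.1, ha.2.trans hlt⟩
      · intro hsub
        have := hsub (Finset.mem_filter.2 ⟨hx, hlt⟩)
        simp only [Finset.mem_filter] at this
        exact lt_irrefl x this.2
    exact absurd h (Finset.card_lt_card this).ne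
  · have : (W.filter (· < y)) ⊂ (W.filter (· < x)) := by
      constructor
      · intro a ha; simp only [Finset.mem_filter] at ha ⊢; exact ⟨ha.1, ha.2.trans hlt⟩
      · intro hsub
        have := hsub (Finset.mem_filter.2 ⟨hy, hlt⟩)
        simp only [Finset.mem_filter] at this
        exact lt_irrefl y this.2
    exact absurd h.symm (Finset.card_lt_card this).ne

/-- uniqueness of an order-compatible injection onto a fixed image -/
theorem mono_unique {S : Finset V} {f g : V → ℕ}
    (hinjf : Function.Injective f) (hinjg : Function.Injective g)
    (him : S.image f = S.image g)
    (horder : ∀ a ∈ S, ∀ b ∈ S, (f a < f b ↔ g a < g b)) :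
    ∀ a ∈ S, f a = g a := by
  intro a ha
  have h1 : (S.image f).filter (· < f a) = (S.filter (fun b => f b < f a)).image f :=
    Finset.filter_image
  have h2 : (S.image g).filter (· < g a) = (S.filter (fun b => g b < g a)).image g :=
    Finset.filter_image
  have hfe : S.filter (fun b => f b < f a) = S.filter (fun b => g b < g a) := by
    apply Finset.filter_congr
    intro b hb
    exact horder b hb a ha
  apply filter_lt_card_inj (W := S.image f)
  · exact Finset.mem_image_of_mem f ha
  · rw [him]; exact Finset.mem_image_of_mem g ha
  · rw [h1]
    conv_rhs => rw [him, h2]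
    rw [Finset.card_image_of_injective _ hinjf, Finset.card_image_of_injective _ hinjg, hfe]

------------------------------------------------------------------
-- successor-cycle permutations from sorted lists
------------------------------------------------------------------
section SuccPerm
variable {α : Type*} [LinearOrder α] [DecidableEq α] (F : Finset α)

/-- the cycle sending each element of `F` to the next one (the largest to the smallest) -/
def succPerm : Equiv.Perm α := (F.sort (· ≤ ·)).formPerm

variable {F}

theorem sort_getElem_lt_iff {i j : ℕ} (hi : i < (F.sort (· ≤ ·)).length)
    (hj : j < (F.sort (· ≤ ·)).length) :
    (F.sort (· ≤ ·))[i] < (F.sort (· ≤ ·))[j] ↔ i < j := by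
  have hs := List.pairwise_iff_getElem.1 (F.sortedLT_sort.pairwise)
  constructor
  · intro h
    rcases lt_trichotomy i j with h' | h' | h'
    · exact h'
    · subst h'; exact absurd h (lt_irrefl _)
    · exact absurd (hs j i hj hi h') (not_lt.2 h.le)
  · exact fun h => hs i j hi hj h

theorem succPerm_not_mem {q : α} (h : q ∉ F) : succPerm F q = q :=
  List.formPerm_apply_of_notMem (by rwa [Finset.mem_sort])

theorem succPerm_mem {q : α} (h : q ∈ F) : succPerm F q ∈ F := by
  rw [← Finset.mem_sort (· ≤ ·)]
  exact List.formPerm_apply_mem_of_mem (by rwa [Finset.mem_sort])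

theorem sort_length_pos (hne : F.Nonempty) : 0 < (F.sort (· ≤ ·)).length := by
  rw [Finset.length_sort]
  exact Finset.card_pos.2 hne

theorem succPerm_max' (hne : F.Nonempty) : succPerm F (F.max' hne) = F.min' hne := by
  have hlen := sort_length_pos hne
  have hmax : (F.sort (· ≤ ·))[(F.sort (· ≤ ·)).length - 1]'(by omega) = F.max' hne :=
    Finset.sorted_last_eq_max'
  have hmin : (F.sort (· ≤ ·))[0]'hlen = F.min' hne := Finset.sorted_zero_eq_min'
  rw [← hmax, ← hmin]
  rw [succPerm, List.formPerm_apply_getElem _ (F.sort_nodup _) _ (by omega)]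
  exact getElem_congr_idx (by rw [Nat.sub_add_cancel hlen]; exact Nat.mod_self _)

/-- index of a non-maximal element is below length - 1 -/
theorem succPerm_lt_of_ne_max' {q : α} (hq : q ∈ F) (hne : F.Nonempty)
    (hmax : q ≠ F.max' hne) : q < succPerm F q := by
  obtain ⟨i, hi, hiq⟩ := List.mem_iff_getElem.1 ((Finset.mem_sort (· ≤ ·)).2 hq)
  have hlen := sort_length_pos hne
  have hilt : i < (F.sort (· ≤ ·)).length - 1 := by
    rcases lt_or_eq_of_le (Nat.le_sub_one_of_lt hi) with h | h
    · exact h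
    · exfalso; apply hmax
      rw [← hiq, ← Finset.sorted_last_eq_max' (h := by omega)]
      congr 1
  rw [← hiq, succPerm, List.formPerm_apply_getElem _ (F.sort_nodup _) _ hi]
  rw [getElem_congr_idx (Nat.mod_eq_of_lt (by omega : i + 1 < (F.sort (· ≤ ·)).length))]
  exact (sort_getElem_lt_iff hi (by omega)).2 (by omega)

theorem succPerm_mono {q₁ q₂ : α} (h1 : q₁ ∈ F) (h2 : q₂ ∈ F) (hne : F.Nonempty)
    (hm1 : q₁ ≠ F.max' hne) (hm2 : q₂ ≠ F.max' hne) (hlt : q₁ < q₂) :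
    succPerm F q₁ < succPerm F q₂ := by
  obtain ⟨i, hi, hiq⟩ := List.mem_iff_getElem.1 ((Finset.mem_sort (· ≤ ·)).2 h1)
  obtain ⟨j, hj, hjq⟩ := List.mem_iff_getElem.1 ((Finset.mem_sort (· ≤ ·)).2 h2)
  have hlen := sort_length_pos ⟨q₁, h1⟩
  have hilt : i < (F.sort (· ≤ ·)).length - 1 := by
    rcases lt_or_eq_of_le (Nat.le_sub_one_of_lt hi) with h | h
    · exact h
    · exfalso; apply hm1
      rw [← hiq, ← Finset.sorted_last_eq_max' (h := by omega)]
      congr 1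
  have hjlt : j < (F.sort (· ≤ ·)).length - 1 := by
    rcases lt_or_eq_of_le (Nat.le_sub_one_of_lt hj) with h | h
    · exact h
    · exfalso; apply hm2
      rw [← hjq, ← Finset.sorted_last_eq_max' (h := by omega)]
      congr 1
  have hij : i < j := by
    rw [← hiq, ← hjq] at hlt
    exact (sort_getElem_lt_iff hi hj).1 hlt
  rw [← hiq, ← hjq, succPerm, List.formPerm_apply_getElem _ (F.sort_nodup _) _ hi,
    List.formPerm_apply_getElem _ (F.sort_nodup _) _ hj]
  rw [getElem_congr_idx (Nat.mod_eq_of_lt (by omega : i + 1 < (F.sort (· ≤ ·)).length)),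
    getElem_congr_idx (Nat.mod_eq_of_lt (by omega : j + 1 < (F.sort (· ≤ ·)).length))]
  exact (sort_getElem_lt_iff (by omega) (by omega)).2 (by omega)

-- facts about the inverse (predecessor) permutation
theorem Equiv.Perm.apply_inv_self {β : Type*} (f : Equiv.Perm β) (x : β) : f (f⁻¹ x) = x :=
  Equiv.apply_symm_apply f x

theorem Equiv.Perm.inv_apply_self {β : Type*} (f : Equiv.Perm β) (x : β) : f⁻¹ (f x) = x :=
  Equiv.symm_apply_apply f x

theorem invPerm_not_mem {q : α} (h : q ∉ F) : (succPerm F)⁻¹ q = q := by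
  have : succPerm F q = q := succPerm_not_mem h
  calc (succPerm F)⁻¹ q = (succPerm F)⁻¹ (succPerm F q) := by rw [this]
  _ = q := Equiv.Perm.inv_apply_self _ _

theorem invPerm_mem {q : α} (h : q ∈ F) : (succPerm F)⁻¹ q ∈ F := by
  by_contra hc
  have : succPerm F ((succPerm F)⁻¹ q) = (succPerm F)⁻¹ q := succPerm_not_mem hc
  rw [Equiv.Perm.apply_inv_self] at this
  exact hc (this ▸ h)

theorem invPerm_min' (hne : F.Nonempty) : (succPerm F)⁻¹ (F.min' hne) = F.max' hne := by
  rw [← succPerm_max' hne, Equiv.Perm.inv_apply_self]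

theorem invPerm_ne_max' {q : α} (h : q ∈ F) (hne : F.Nonempty) (hq : q ≠ F.min' hne) :
    (succPerm F)⁻¹ q ≠ F.max' hne := by
  intro hc
  apply hq
  have := congrArg (succPerm F) hc
  rw [Equiv.Perm.apply_inv_self, succPerm_max' hne] at this
  exact this

theorem invPerm_mono {q₁ q₂ : α} (h1 : q₁ ∈ F) (h2 : q₂ ∈ F) (hne : F.Nonempty)
    (hm1 : q₁ ≠ F.min' hne) (hm2 : q₂ ≠ F.min' hne) (hlt : q₁ < q₂) :
    (succPerm F)⁻¹ q₁ < (succPerm F)⁻¹ q₂ := by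
  have ha1 : (succPerm F)⁻¹ q₁ ∈ F := invPerm_mem h1
  have ha2 : (succPerm F)⁻¹ q₂ ∈ F := invPerm_mem h2
  have hb1 : (succPerm F)⁻¹ q₁ ≠ F.max' hne := invPerm_ne_max' h1 hne hm1
  have hb2 : (succPerm F)⁻¹ q₂ ≠ F.max' hne := invPerm_ne_max' h2 hne hm2
  rcases lt_trichotomy ((succPerm F)⁻¹ q₁) ((succPerm F)⁻¹ q₂) with h | h | h
  · exact h
  · exfalso
    have := congrArg (succPerm F) h
    rw [Equiv.Perm.apply_inv_self, Equiv.Perm.apply_inv_self] at this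
    exact absurd this (ne_of_lt hlt)
  · exfalso
    have := succPerm_mono ha2 ha1 hne hb2 hb1 h
    rw [Equiv.Perm.apply_inv_self, Equiv.Perm.apply_inv_self] at this
    exact absurd hlt (not_lt.2 this.le)

end SuccPerm

------------------------------------------------------------------
-- Section E : the encoding injection
------------------------------------------------------------------

section Encode

variable {n : ℕ}

/-- rank function of an indexing bijection -/
def rk (π : V ≃ Fin n) : V → ℕ := fun y => (π y : ℕ)

theorem rk_inj (π : V ≃ Fin n) : Function.Injective (rk π) :=
  fun a b h => π.injective (Fin.val_injective h)

theorem generic_lt_iff {β γ : Type*} [LinearOrder β] [LinearOrder γ] {p : V → Prop}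
    {f : V → β} {g : V → γ}
    (hinj : ∀ a b, p a → p b → f a = f b → a = b)
    (hmono : ∀ a b, p a → p b → f a < f b → g a < g b) :
    ∀ a b, p a → p b → (f a < f b ↔ g a < g b) := by
  intro a b ha hb
  constructor
  · exact hmono a b ha hb
  · intro h
    rcases lt_trichotomy (f a) (f b) with h' | h' | h'
    · exact h'
    · exact absurd (hinj a b ha hb h' ▸ h) (lt_irrefl _)
    · exact absurd (hmono b a hb ha h') (not_lt.2 h.le)

noncomputable def encP (G G' : SimpleGraph V) (v : V) (π : V ≃ Fin n) (x : V) :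
    Finset (Fin n) :=
  ((Set.toFinite (influencedSet G G' (rk π) v)).toFinset.filter
      (fun y => π y ≤ π x)).image (fun y => π y)

noncomputable def enc (G G' : SimpleGraph V) (v : V) (π : V ≃ Fin n) (x : V) : V ≃ Fin n :=
  π.trans (succPerm (encP G G' v π x))⁻¹

noncomputable def dec (v : V) (A : ℕ) (hAn : A < n) (σ : V ≃ Fin n) : V ≃ Fin n :=
  σ.trans (succPerm (Finset.Icc (⟨A, hAn⟩ : Fin n) (σ v)))

theorem encode_spec {G G' : SimpleGraph V} {u v : V} {A : ℕ}
    (hupd : G' = G ⊔ SimpleGraph.fromEdgeSet {s(u, v)} ∨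
      G' = G \ SimpleGraph.fromEdgeSet {s(u, v)})
    (hAn : A < n)
    (π : V ≃ Fin n) (x : V)
    (huA : (π u).val < A) (hvA : A ≤ (π v).val)
    (hx : x ∈ influencedSet G G' (rk π) v) :
    enc G G' v π x u = π u ∧
    enc G G' v π x v = π x ∧
    (∀ y ∉ influencedSet G G' (rk π) v, enc G G' v π x y = π y) ∧
    influencedSet G G' (rk (dec v A hAn (enc G G' v π x))) v
      = influencedSet G G' (rk π) v ∧
    (∀ a ∈ influencedSet G G' (rk π) v, ∀ b ∈ influencedSet G G' (rk π) v,
      (rk π a < rk π b ↔ rk (dec v A hAn (enc G G' v π x)) a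
        < rk (dec v A hAn (enc G G' v π x)) b)) ∧
    (Set.toFinite (influencedSet G G' (rk π) v)).toFinset.image (rk π)
      = (Set.toFinite (influencedSet G G' (rk π) v)).toFinset.image (rk (enc G G' v π x)) := by
  classical
  set S : Set V := influencedSet G G' (rk π) v with hSdef
  have hviol : violated G G' (rk π) v := hx.1
  have hSU : S = UU G G' (rk π) v := influencedSet_eq_UU hviol
  have hvS : v ∈ S := v_mem_influencedSet hviol
  have hrankle : ∀ y ∈ S, (π v).val ≤ (π y).val := by
    intro y hy; rw [hSU] at hy; exact UU_rank_le hupd y hy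
  have hxle : π v ≤ π x := Fin.le_def.2 (hrankle x hx)
  have hrkuv : rk π u < rk π v := lt_of_lt_of_le huA hvA
  have hunotS : u ∉ S := fun h => absurd (hrankle u h) (not_le.2 hrkuv)
  set Sf : Finset V := (Set.toFinite S).toFinset with hSf
  have hmemSf : ∀ y, y ∈ Sf ↔ y ∈ S := fun y => Set.Finite.mem_toFinset _
  set P : Finset (Fin n) := encP G G' v π x with hP
  have hmemP : ∀ p, p ∈ P ↔ ∃ y, (y ∈ S ∧ π y ≤ π x) ∧ π y = p := by
    intro p
    simp only [hP, encP, Finset.mem_image, Finset.mem_filter, Set.Finite.mem_toFinset]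
    exact Iff.rfl
  have hPv : π v ∈ P := (hmemP _).2 ⟨v, ⟨hvS, hxle⟩, rfl⟩
  have hPx : π x ∈ P := (hmemP _).2 ⟨x, ⟨hx, le_refl _⟩, rfl⟩
  have hPne : P.Nonempty := ⟨π v, hPv⟩
  have hminP : P.min' hPne = π v := by
    apply le_antisymm (Finset.min'_le _ _ hPv)
    apply Finset.le_min'
    intro p hp
    obtain ⟨y, ⟨hyS, _⟩, hyp⟩ := (hmemP p).1 hp
    rw [← hyp]
    exact Fin.le_def.2 (hrankle y hyS)
  have hmaxP : P.max' hPne = π x := by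
    apply le_antisymm
    · apply Finset.max'_le
      intro p hp
      obtain ⟨y, ⟨_, hyx⟩, hyp⟩ := (hmemP p).1 hp
      rw [← hyp]; exact hyx
    · exact Finset.le_max' _ _ hPx
  set σ : V ≃ Fin n := enc G G' v π x with hσdef
  have hσapp : ∀ y, σ y = (succPerm P)⁻¹ (π y) := fun y => rfl
  -- (E3)
  have hE3 : ∀ y ∉ S, σ y = π y := by
    intro y hy
    rw [hσapp]
    apply invPerm_not_mem
    intro hmem
    obtain ⟨y', ⟨hy'S, _⟩, hy'⟩ := (hmemP _).1 hmem
    exact hy (π.injective hy' ▸ hy'S)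
  have hE1 : σ u = π u := hE3 u hunotS
  have hE2 : σ v = π x := by
    rw [hσapp, ← hminP, invPerm_min' hPne, hmaxP]
  -- σ stays above π v on S
  have hσS : ∀ y ∈ S, π v ≤ σ y := by
    intro y hy
    rw [hσapp]
    by_cases hyP : π y ∈ P
    · rw [← hminP]
      exact Finset.min'_le _ _ (invPerm_mem hyP)
    · rw [invPerm_not_mem hyP]
      exact Fin.le_def.2 (hrankle y hy)
  -- σ is monotone on S \ {v}
  have hσmono : ∀ a b, (a ∈ S ∧ a ≠ v) → (b ∈ S ∧ b ≠ v) → π a < π b → σ a < σ b := by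
    rintro a b ⟨haS, hav⟩ ⟨hbS, hbv⟩ hlt
    rw [hσapp, hσapp]
    by_cases haP : π a ∈ P <;> by_cases hbP : π b ∈ P
    · apply invPerm_mono haP hbP hPne
      · rw [hminP]; exact fun hc => hav (π.injective hc)
      · rw [hminP]; exact fun hc => hbv (π.injective hc)
      · exact hlt
    · have hxb : π x < π b := by
        rcases lt_or_ge (π x) (π b) with h | h
        · exact h
        · exact absurd ((hmemP _).2 ⟨b, ⟨hbS, h⟩, rfl⟩) hbP
      rw [invPerm_not_mem hbP]
      calc (succPerm P)⁻¹ (π a) ≤ P.max' hPne := Finset.le_max' _ _ (invPerm_mem haP)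
      _ = π x := hmaxP
      _ < π b := hxb
    · exfalso
      have hxa : π x < π a := by
        rcases lt_or_ge (π x) (π a) with h | h
        · exact h
        · exact absurd ((hmemP _).2 ⟨a, ⟨haS, h⟩, rfl⟩) haP
      have : π b ≤ π x := by
        obtain ⟨y, ⟨_, hyx⟩, hyp⟩ := (hmemP _).1 hbP
        exact hyp ▸ hyx
      exact absurd hlt (not_lt.2 (this.trans hxa.le))
    · rw [invPerm_not_mem haP, invPerm_not_mem hbP]; exact hlt
  have hσiff : ∀ a b, (a ∈ S ∧ a ≠ v) → (b ∈ S ∧ b ≠ v) → (π a < π b ↔ σ a < σ b) :=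
    generic_lt_iff (fun a b _ _ h => π.injective h) hσmono
  -- the decoded permutation
  set m : Fin n := σ v with hm
  have hmval : m = π x := hE2
  set DD : Finset (Fin n) := Finset.Icc (⟨A, hAn⟩ : Fin n) m with hDD
  have hAm : (⟨A, hAn⟩ : Fin n) ≤ m := by
    rw [hmval, Fin.le_def]
    exact le_trans hvA (hrankle x hx)
  have hmD : m ∈ DD := Finset.mem_Icc.2 ⟨hAm, le_refl _⟩
  have hDDne : DD.Nonempty := ⟨m, hmD⟩
  have hminD : DD.min' hDDne = ⟨A, hAn⟩ := by
    apply le_antisymm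
    · exact Finset.min'_le _ _ (Finset.mem_Icc.2 ⟨le_refl _, hAm⟩)
    · apply Finset.le_min'
      intro p hp; exact (Finset.mem_Icc.1 hp).1
  have hmaxD : DD.max' hDDne = m := by
    apply le_antisymm
    · apply Finset.max'_le; intro p hp; exact (Finset.mem_Icc.1 hp).2
    · exact Finset.le_max' _ _ hmD
  set d : Equiv.Perm (Fin n) := succPerm DD with hd
  set ρ : V ≃ Fin n := dec v A hAn σ with hρdef
  have hρapp : ∀ y, ρ y = d (σ y) := fun y => rfl
  -- (R1)
  have hR1 : ρ v = ⟨A, hAn⟩ := by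
    rw [hρapp, ← hm, ← hmaxD, ← hminD]
    exact succPerm_max' hDDne
  -- d is monotone away from m
  have hdmono : ∀ i j : Fin n, i ≠ m → j ≠ m → i < j → d i < d j := by
    intro i j him hjm hij
    by_cases hiD : i ∈ DD <;> by_cases hjD : j ∈ DD
    · apply succPerm_mono hiD hjD hDDne
      · rw [hmaxD]; exact him
      · rw [hmaxD]; exact hjm
      · exact hij
    · have hmj : m < j := by
        rcases Finset.mem_Icc.not.1 hjD with h
        push_neg at h
        exact h ((Finset.mem_Icc.1 hiD).1.trans hij.le)
      rw [hd, succPerm_not_mem hjD]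
      calc succPerm DD i ≤ DD.max' hDDne := Finset.le_max' _ _ (succPerm_mem hiD)
      _ = m := hmaxD
      _ < j := hmj
    · have hiA : i < ⟨A, hAn⟩ := by
        rcases Finset.mem_Icc.not.1 hiD with h
        push_neg at h
        rcases lt_or_ge i ⟨A, hAn⟩ with h' | h'
        · exact h'
        · exact absurd (hij.le.trans (Finset.mem_Icc.1 hjD).2) (not_le.2 (h h'))
      rw [hd, succPerm_not_mem hiD]
      calc i < ⟨A, hAn⟩ := hiA
      _ ≤ succPerm DD j := by
          rw [← hminD]; exact Finset.min'_le _ _ (succPerm_mem hjD)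
    · rw [hd, succPerm_not_mem hiD, succPerm_not_mem hjD]; exact hij
  have hdiff : ∀ i j : Fin n, i ≠ m → j ≠ m → (i < j ↔ d i < d j) := by
    intro i j him hjm
    exact generic_lt_iff (p := fun i => i ≠ m) (f := id) (g := d)
      (fun a b _ _ h => h) (fun a b ha hb h => hdmono a b ha hb h) i j him hjm
  -- (R4)
  have hR4 : ∀ y ∈ S, y ≠ v → (⟨A, hAn⟩ : Fin n) < ρ y := by
    intro y hyS hyv
    have hne : σ y ≠ m := fun hc => hyv (σ.injective hc)
    have hAy : (⟨A, hAn⟩ : Fin n) ≤ σ y := le_trans (Fin.le_def.2 hvA) (hσS y hyS)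
    rw [hρapp]
    by_cases hyD : σ y ∈ DD
    · have := succPerm_lt_of_ne_max' hyD hDDne (by rw [hmaxD]; exact hne)
      exact lt_of_le_of_lt hAy this
    · rw [hd, succPerm_not_mem hyD]
      rcases Finset.mem_Icc.not.1 hyD with h
      push_neg at h
      exact lt_of_le_of_lt hAm (h hAy)
  -- H1 for (π, ρ)
  have hH1 : ∀ a ∈ S, ∀ b ∈ S, (rk π a < rk π b ↔ rk ρ a < rk ρ b) := by
    intro a haS b hbS
    rw [show rk π a < rk π b ↔ π a < π b from Iff.rfl.trans (Fin.lt_def).symm,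
      show rk ρ a < rk ρ b ↔ ρ a < ρ b from Iff.rfl.trans (Fin.lt_def).symm]
    by_cases hav : a = v <;> by_cases hbv : b = v
    · rw [hav, hbv]; simp
    · rw [hav]
      have h1 : π v < π b :=
        lt_of_le_of_ne (Fin.le_def.2 (hrankle b hbS)) (fun hc => hbv (π.injective hc.symm))
      have h2 : ρ v < ρ b := hR1 ▸ hR4 b hbS hbv
      exact iff_of_true h1 h2
    · rw [hbv]
      have h1 : ¬ (π a < π v) := not_lt.2 (Fin.le_def.2 (hrankle a haS))
      have h2 : ¬ (ρ a < ρ v) := by rw [hR1]; exact not_lt.2 (hR4 a haS hav).le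
      exact iff_of_false h1 h2
    · have step1 := hσiff a b ⟨haS, hav⟩ ⟨hbS, hbv⟩
      have step2 := hdiff (σ a) (σ b)
        (fun hc => hav (σ.injective hc)) (fun hc => hbv (σ.injective hc))
      rw [step1, hρapp, hρapp]
      exact step2
  -- H2 for (π, ρ)
  have hH2 : ∀ a ∉ S, ∀ b ∉ S, (rk π a < rk π b ↔ rk ρ a < rk ρ b) := by
    intro a haS b hbS
    rw [show rk π a < rk π b ↔ π a < π b from Iff.rfl.trans (Fin.lt_def).symm,
      show rk ρ a < rk ρ b ↔ ρ a < ρ b from Iff.rfl.trans (Fin.lt_def).symm]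
    have hav : a ≠ v := fun hc => haS (hc ▸ hvS)
    have hbv : b ≠ v := fun hc => hbS (hc ▸ hvS)
    rw [hρapp, hρapp, hE3 a haS, hE3 b hbS]
    exact hdiff (π a) (π b)
      (by rw [← hE3 a haS]; exact fun hc => hav (σ.injective hc))
      (by rw [← hE3 b hbS]; exact fun hc => hbv (σ.injective hc))
  have hH3' : rk ρ u < rk ρ v := by
    have hρu : ρ u = π u := by
      rw [hρapp, hE1, hd, succPerm_not_mem]
      intro hc
      have := (Finset.mem_Icc.1 hc).1
      rw [Fin.le_def] at this
      exact absurd this (not_le.2 huA)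
    show (ρ u).val < (ρ v).val
    rw [hρu, hR1]
    exact huA
  -- (E4)
  have hE4 : influencedSet G G' (rk ρ) v = S :=
    influencedSet_invariance hupd (rk_inj π) (rk_inj ρ) hviol hH1 hH2 hrkuv hH3'
  -- (E6) : images agree
  have hE6 : Sf.image (rk π) = Sf.image (rk σ) := by
    have himgFin : Sf.image (fun y => π y) = Sf.image (fun y => σ y) := by
      apply (Finset.eq_of_subset_of_card_le ?_ ?_).symm
      · intro p hp
        obtain ⟨y, hy, hyp⟩ := Finset.mem_image.1 hp
        rw [hσapp] at hyp
        by_cases hyP : π y ∈ P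
        · have : p ∈ P := hyp ▸ invPerm_mem hyP
          obtain ⟨y', ⟨hy'S, _⟩, hy'⟩ := (hmemP _).1 this
          exact Finset.mem_image.2 ⟨y', (hmemSf _).2 hy'S, hy'⟩
        · rw [invPerm_not_mem hyP] at hyp
          exact Finset.mem_image.2 ⟨y, hy, hyp⟩
      · rw [Finset.card_image_of_injective _ π.injective,
          Finset.card_image_of_injective _ σ.injective]
    have h1 : Sf.image (rk π) = (Sf.image (fun y => π y)).image Fin.val := by
      rw [Finset.image_image]; rfl
    have h2 : Sf.image (rk σ) = (Sf.image (fun y => σ y)).image Fin.val := by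
      rw [Finset.image_image]; rfl
    rw [h1, h2, himgFin]
  exact ⟨hE1, hE2, hE3, hE4, hH1, hE6⟩

end Encode

------------------------------------------------------------------
-- Section F : injectivity of the encoding
------------------------------------------------------------------

section Inj

variable {n : ℕ} {G G' : SimpleGraph V} {u v : V} {A : ℕ}

theorem mem_rank_ge
    (hupd : G' = G ⊔ SimpleGraph.fromEdgeSet {s(u, v)} ∨
      G' = G \ SimpleGraph.fromEdgeSet {s(u, v)})
    {π : V ≃ Fin n} {x : V} (hx : x ∈ influencedSet G G' (rk π) v) :
    (π v).val ≤ (π x).val := by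
  have hviol := hx.1
  rw [influencedSet_eq_UU hviol] at hx
  exact UU_rank_le hupd x hx

theorem enc_inj
    (hupd : G' = G ⊔ SimpleGraph.fromEdgeSet {s(u, v)} ∨
      G' = G \ SimpleGraph.fromEdgeSet {s(u, v)})
    (hAn : A < n)
    (π₁ π₂ : V ≃ Fin n) (x₁ x₂ : V)
    (hu1 : (π₁ u).val < A) (hv1 : A ≤ (π₁ v).val)
    (hu2 : (π₂ u).val < A) (hv2 : A ≤ (π₂ v).val)
    (hx1 : x₁ ∈ influencedSet G G' (rk π₁) v)
    (hx2 : x₂ ∈ influencedSet G G' (rk π₂) v)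
    (heq : enc G G' v π₁ x₁ = enc G G' v π₂ x₂) :
    π₁ = π₂ ∧ x₁ = x₂ := by
  obtain ⟨hE11, hE12, hE13, hE14, hE15, hE16⟩ := encode_spec hupd hAn π₁ x₁ hu1 hv1 hx1
  obtain ⟨hE21, hE22, hE23, hE24, hE25, hE26⟩ := encode_spec hupd hAn π₂ x₂ hu2 hv2 hx2
  have hSeq : influencedSet G G' (rk π₁) v = influencedSet G G' (rk π₂) v := by
    rw [← hE14, ← hE24, heq]
  have hππ : π₁ = π₂ := by
    apply Equiv.ext
    intro y
    by_cases hyS : y ∈ influencedSet G G' (rk π₁) v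
    · -- use uniqueness of order-compatible enumerations
      have him : ((Set.toFinite (influencedSet G G' (rk π₁) v)).toFinset).image (rk π₁)
          = ((Set.toFinite (influencedSet G G' (rk π₁) v)).toFinset).image (rk π₂) := by
        have hfs : (Set.toFinite (influencedSet G G' (rk π₁) v)).toFinset
            = (Set.toFinite (influencedSet G G' (rk π₂) v)).toFinset := by
          apply Finset.ext
          intro z
          rw [Set.Finite.mem_toFinset, Set.Finite.mem_toFinset, hSeq]
        rw [hE16, hfs, hE26, heq]
      have horder : ∀ a ∈ (Set.toFinite (influencedSet G G' (rk π₁) v)).toFinset,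
          ∀ b ∈ (Set.toFinite (influencedSet G G' (rk π₁) v)).toFinset,
          (rk π₁ a < rk π₁ b ↔ rk π₂ a < rk π₂ b) := by
        intro a ha b hb
        rw [Set.Finite.mem_toFinset] at ha hb
        have h1 := hE15 a ha b hb
        have h2 := hE25 a (hSeq ▸ ha) b (hSeq ▸ hb)
        rw [heq] at h1
        rw [h1, h2]
      have := mono_unique (rk_inj π₁) (rk_inj π₂) him horder y
        ((Set.Finite.mem_toFinset _).2 hyS)
      exact Fin.val_injective this
    · have h1 : enc G G' v π₁ x₁ y = π₁ y := hE13 y hyS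
      have h2 : enc G G' v π₂ x₂ y = π₂ y := hE23 y (hSeq ▸ hyS)
      rw [← h1, ← h2, heq]
  refine ⟨hππ, ?_⟩
  have : π₁ x₁ = π₂ x₂ := by rw [← hE12, ← hE22, heq]
  rw [hππ] at this
  exact π₂.injective this

end Inj

------------------------------------------------------------------
-- Section G : counting
------------------------------------------------------------------

section Count

variable {n C A B : ℕ} {u v : V}

theorem swap_twice {n : ℕ} (v : V) (τ : V ≃ Fin n) (w : Fin n) :
    (τ.trans (Equiv.swap (τ v) w)).trans (Equiv.swap w (τ v)) = τ := by
  apply Equiv.ext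
  intro y
  simp only [Equiv.trans_apply]
  rw [Equiv.swap_comm]
  exact Equiv.swap_apply_self _ _ _

theorem count_swap (huv : u ≠ v) (hC : 1 ≤ C) (hCA : C ≤ A) (hAB : A < B) (hBn : B ≤ n) :
    (Finset.Ico A n).card * (Finset.univ.filter (fun π : V ≃ Fin n =>
        (π u).val + 1 = C ∧ A ≤ (π v).val ∧ (π v).val < B)).card
      = (Finset.Ico A B).card * (Finset.univ.filter (fun σ : V ≃ Fin n =>
        (σ u).val + 1 = C ∧ A ≤ (σ v).val)).card := by
  classical
  rw [← Finset.card_product, ← Finset.card_product]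
  have huswap : ∀ (τ : V ≃ Fin n) (w : Fin n), (τ u).val + 1 = C → A ≤ (τ v).val →
      A ≤ w.val → (τ.trans (Equiv.swap (τ v) w)) u = τ u := by
    intro τ w hu hv hw
    have h1 : τ u ≠ τ v := fun hc => huv (τ.injective hc)
    have h2 : τ u ≠ w := by
      intro hc
      have : (τ u).val = w.val := congrArg Fin.val hc
      omega
    rw [Equiv.trans_apply]
    exact Equiv.swap_apply_of_ne_of_ne h1 h2
  have hvswap : ∀ (τ : V ≃ Fin n) (w : Fin n), (τ.trans (Equiv.swap (τ v) w)) v = w := by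
    intro τ w
    rw [Equiv.trans_apply, Equiv.swap_apply_left]
  apply Finset.card_bij'
    (i := fun p hp => ((p.2 v).val, p.2.trans (Equiv.swap (p.2 v)
      ⟨p.1, (Finset.mem_Ico.1 (Finset.mem_product.1 hp).1).2⟩)))
    (j := fun q hq => ((q.2 v).val, q.2.trans (Equiv.swap (q.2 v)
      ⟨q.1, lt_of_lt_of_le (Finset.mem_Ico.1 (Finset.mem_product.1 hq).1).2 hBn⟩)))
  case hi =>
    intro p hp
    obtain ⟨hp1, hp2⟩ := Finset.mem_product.1 hp
    rw [Finset.mem_Ico] at hp1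
    rw [Finset.mem_filter] at hp2
    obtain ⟨-, hu, hv, hvB⟩ := hp2
    refine Finset.mem_product.2 ⟨Finset.mem_Ico.2 ⟨hv, hvB⟩,
      Finset.mem_filter.2 ⟨Finset.mem_univ _, ?_, ?_⟩⟩
    · show ((p.2.trans (Equiv.swap (p.2 v) ⟨p.1, hp1.2⟩)) u).val + 1 = C
      rw [huswap _ _ hu hv hp1.1]; exact hu
    · show A ≤ ((p.2.trans (Equiv.swap (p.2 v) ⟨p.1, hp1.2⟩)) v).val
      rw [hvswap]; exact hp1.1
  case hj =>
    intro q hq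
    obtain ⟨hq1, hq2⟩ := Finset.mem_product.1 hq
    rw [Finset.mem_Ico] at hq1
    rw [Finset.mem_filter] at hq2
    obtain ⟨-, hu, hv⟩ := hq2
    refine Finset.mem_product.2 ⟨Finset.mem_Ico.2 ⟨hv, (q.2 v).isLt⟩,
      Finset.mem_filter.2 ⟨Finset.mem_univ _, ?_, ?_, ?_⟩⟩
    · show ((q.2.trans (Equiv.swap (q.2 v) ⟨q.1, lt_of_lt_of_le hq1.2 hBn⟩)) u).val + 1 = C
      rw [huswap _ _ hu hv hq1.1]; exact hu
    · show A ≤ ((q.2.trans (Equiv.swap (q.2 v) ⟨q.1, lt_of_lt_of_le hq1.2 hBn⟩)) v).val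
      rw [hvswap]; exact hq1.1
    · show ((q.2.trans (Equiv.swap (q.2 v) ⟨q.1, lt_of_lt_of_le hq1.2 hBn⟩)) v).val < B
      rw [hvswap]; exact hq1.2
  case left_inv =>
    rintro ⟨j, τ⟩ hp
    obtain ⟨hp1, hp2⟩ := Finset.mem_product.1 hp
    rw [Finset.mem_Ico] at hp1
    show ((((τ.trans (Equiv.swap (τ v) ⟨j, hp1.2⟩)) v).val : ℕ),
      (τ.trans (Equiv.swap (τ v) ⟨j, hp1.2⟩)).trans
        (Equiv.swap ((τ.trans (Equiv.swap (τ v) ⟨j, hp1.2⟩)) v)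
          ⟨(τ v).val, (τ v).isLt⟩)) = (j, τ)
    simp only [hvswap]
    exact Prod.ext rfl (swap_twice v τ _)
  case right_inv =>
    rintro ⟨k, τ⟩ hq
    obtain ⟨hq1, hq2⟩ := Finset.mem_product.1 hq
    rw [Finset.mem_Ico] at hq1
    show ((((τ.trans (Equiv.swap (τ v) ⟨k, lt_of_lt_of_le hq1.2 hBn⟩)) v).val : ℕ),
      (τ.trans (Equiv.swap (τ v) ⟨k, lt_of_lt_of_le hq1.2 hBn⟩)).trans
        (Equiv.swap ((τ.trans (Equiv.swap (τ v) ⟨k, lt_of_lt_of_le hq1.2 hBn⟩)) v)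
          ⟨(τ v).val, (τ v).isLt⟩)) = (k, τ)
    simp only [hvswap]
    exact Prod.ext rfl (swap_twice v τ _)

end Count


/-- For a uniformly random bijection `π : V ≃ Fin n` (1-indexed position of `x`
is `(π x).val + 1`) conditioned on `π(u) = C` and `π(v) ∈ [A+1, B]`
(`u ≠ v`, `1 ≤ C ≤ A < B ≤ n`), the expected size of the influenced set
`S_v^π` of the edge update between `u` and `v` is strictly less than
`n/(B−A)`. -/
theorem stmt19 (G G' : SimpleGraph V) (u v : V) (huv : u ≠ v)
    (hupd : G' = G ⊔ SimpleGraph.fromEdgeSet {s(u, v)} ∨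
      G' = G \ SimpleGraph.fromEdgeSet {s(u, v)})
    (n C A B : ℕ) (hcard : Fintype.card V = n)
    (hC : 1 ≤ C) (hCA : C ≤ A) (hAB : A < B) (hBn : B ≤ n) :
    (∑ π : V ≃ Fin n,
        if (π u).val + 1 = C ∧ A ≤ (π v).val ∧ (π v).val < B then
          ((influencedSet G G' (fun x => ((π x : Fin n) : ℕ)) v).ncard : ℝ)
        else 0) /
      (({π : V ≃ Fin n |
          (π u).val + 1 = C ∧ A ≤ (π v).val ∧ (π v).val < B}).ncard : ℝ)
      < (n : ℝ) / ((B : ℝ) - A) := by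
  classical
  have hAn : A < n := lt_of_lt_of_le hAB hBn
  set Efin : Finset (V ≃ Fin n) := Finset.univ.filter (fun π : V ≃ Fin n =>
    (π u).val + 1 = C ∧ A ≤ (π v).val ∧ (π v).val < B) with hEfin
  set Big : Finset (V ≃ Fin n) := Finset.univ.filter (fun σ : V ≃ Fin n =>
    (σ u).val + 1 = C ∧ A ≤ (σ v).val) with hBig
  -- the numerator as a natural number
  set NumN : ℕ := ∑ π ∈ Efin, (influencedSet G G' (rk π) v).ncard with hNumN
  have hnum : (∑ π : V ≃ Fin n,
      if (π u).val + 1 = C ∧ A ≤ (π v).val ∧ (π v).val < B then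
        ((influencedSet G G' (fun x => ((π x : Fin n) : ℕ)) v).ncard : ℝ)
      else 0) = (NumN : ℝ) := by
    rw [hNumN, Nat.cast_sum]
    exact (Finset.sum_filter _ _).symm
  -- the domain of the injection
  set Dom : Finset ((_ : V ≃ Fin n) × V) := Efin.sigma
    (fun π => (Set.toFinite (influencedSet G G' (rk π) v)).toFinset) with hDom
  have hDomcard : Dom.card = NumN := by
    rw [hDom, Finset.card_sigma, hNumN]
    apply Finset.sum_congr rfl
    intro π _
    exact (Set.ncard_eq_toFinset_card _ _).symm
  -- event facts
  have hmemE : ∀ π : V ≃ Fin n, π ∈ Efin →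
      (π u).val + 1 = C ∧ A ≤ (π v).val ∧ (π v).val < B := by
    intro π hπ
    exact (Finset.mem_filter.1 hπ).2
  have huAE : ∀ π : V ≃ Fin n, π ∈ Efin → (π u).val < A := by
    intro π hπ
    have := (hmemE π hπ).1
    omega
  -- the injection into Big
  have hcount : Dom.card ≤ Big.card := by
    apply Finset.card_le_card_of_injOn (fun p => enc G G' v p.1 p.2)
    · intro p hp
      obtain ⟨hp1, hp2⟩ := Finset.mem_sigma.1 hp
      rw [Set.Finite.mem_toFinset] at hp2
      obtain ⟨hmu, hmv, -⟩ := hmemE p.1 hp1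
      obtain ⟨hE1, hE2, -, -, -, -⟩ :=
        encode_spec hupd hAn p.1 p.2 (huAE p.1 hp1) hmv hp2
      rw [hBig, Finset.mem_coe, Finset.mem_filter]
      refine ⟨Finset.mem_univ _, ?_, ?_⟩
      · rw [hE1]; exact hmu
      · rw [hE2]
        exact le_trans hmv (mem_rank_ge hupd hp2)
    · rintro ⟨π₁, x₁⟩ hp ⟨π₂, x₂⟩ hq heq
      rw [Finset.mem_coe] at hp hq
      obtain ⟨hp1, hp2⟩ := Finset.mem_sigma.1 hp
      obtain ⟨hq1, hq2⟩ := Finset.mem_sigma.1 hq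
      rw [Set.Finite.mem_toFinset] at hp2 hq2
      obtain ⟨h1, h2⟩ := enc_inj hupd hAn π₁ π₂ x₁ x₂
        (huAE π₁ hp1) (hmemE π₁ hp1).2.1 (huAE π₂ hq1) (hmemE π₂ hq1).2.1
        hp2 hq2 heq
      subst h1; subst h2; rfl
  -- the counting identity
  have hswap := count_swap (u := u) (v := v) (n := n) huv hC hCA hAB hBn
  rw [Nat.card_Ico, Nat.card_Ico] at hswap
  -- Efin is nonempty
  have hEpos : 0 < Efin.card := by
    have hCn : C - 1 < n := by omega
    let e : V ≃ Fin n := Fintype.equivFinOfCardEq hcard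
    set σ₁ : V ≃ Fin n := e.trans (Equiv.swap (e u) ⟨C - 1, hCn⟩) with hσ₁
    have hσ₁u : σ₁ u = ⟨C - 1, hCn⟩ := by
      rw [hσ₁, Equiv.trans_apply, Equiv.swap_apply_left]
    set π₀ : V ≃ Fin n := σ₁.trans (Equiv.swap (σ₁ v) ⟨A, hAn⟩) with hπ₀
    have hπ₀v : π₀ v = ⟨A, hAn⟩ := by
      rw [hπ₀, Equiv.trans_apply, Equiv.swap_apply_left]
    have hπ₀u : π₀ u = ⟨C - 1, hCn⟩ := by
      rw [hπ₀, Equiv.trans_apply, hσ₁u]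
      apply Equiv.swap_apply_of_ne_of_ne
      · rw [← hσ₁u]; exact fun hc => huv (σ₁.injective hc)
      · intro hc
        have : C - 1 = A := congrArg Fin.val hc
        omega
    apply Finset.card_pos.2
    refine ⟨π₀, Finset.mem_filter.2 ⟨Finset.mem_univ _, ?_, ?_, ?_⟩⟩
    · rw [hπ₀u]; show C - 1 + 1 = C; omega
    · rw [hπ₀v]
    · rw [hπ₀v]; exact hAB
  -- key natural-number inequality
  have hkey : NumN * (B - A) < n * Efin.card := by
    calc NumN * (B - A) = (B - A) * NumN := Nat.mul_comm _ _
    _ ≤ (B - A) * Big.card := Nat.mul_le_mul_left _ (hDomcard ▸ hcount)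
    _ = (n - A) * Efin.card := hswap.symm
    _ < n * Efin.card := by
        exact (Nat.mul_lt_mul_right hEpos).2 (by omega)
  -- denominator
  have hden : (({π : V ≃ Fin n |
      (π u).val + 1 = C ∧ A ≤ (π v).val ∧ (π v).val < B}).ncard : ℝ) = (Efin.card : ℝ) := by
    congr 1
    rw [Set.ncard_eq_toFinset_card']
    congr 1
    exact Set.toFinset_setOf _
  rw [hnum, hden]
  rw [div_lt_div_iff₀ (by exact_mod_cast hEpos) (by
    rw [show (B : ℝ) - A = ((B - A : ℕ) : ℝ) by push_cast [Nat.cast_sub hAB.le]; ring]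
    exact_mod_cast Nat.sub_pos_of_lt hAB)]
  rw [show (B : ℝ) - A = ((B - A : ℕ) : ℝ) by push_cast [Nat.cast_sub hAB.le]; ring]
  exact_mod_cast hkey
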